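/- Let Φ = (φ_1,...,φ_M) be a finite family of vectors in a vector space V with fundamental partition {F_1,...,F_ℓ}, and let k < ℓ. Then there exists a subset J of the index set with |J| > k · dim span(φ_j : j ∈ J); explicitly, for any index m ∈ F_ℓ and any k-transversal T of {F_1,...,F_k} with φ_m ∈ span(T), the set J = T ∪ {m} satisfies |J| = k · dim span(φ_j : j ∈ T) + 1 and dim span(φ_j : j ∈ J) = dim span(φ_j : j ∈ T), hence |J|/dim span(φ_j : j ∈ J) = k + 1/dim span(φ_j : j ∈ T) > k. -/

import Mathlib

/-- The sequence of part sizes of a partition `F : Fin ℓ → Finset (Fin M)`,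
padded with zeros. -/
def PartSizes {M ℓ : ℕ} (F : Fin ℓ → Finset (Fin M)) : ℕ → ℕ :=
  fun n => if h : n < ℓ then (F ⟨n, h⟩).card else 0

/-- Lexicographic order on sequences of naturals: `a ≤ₗₑₓ b`. -/
def LexLE (a b : ℕ → ℕ) : Prop :=
  a = b ∨ ∃ n, (∀ m < n, a m = b m) ∧ a n < b n

/-- `F : Fin ℓ → Finset (Fin M)` is an ordered partition of the index set `Ω`
into sets indexing linearly independent subfamilies of `φ`: the parts are
nonempty, pairwise disjoint, cover `Ω`, each part indexes a linearly
independent subfamily, and the part sizes are non-increasing. -/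
def IsOrderedLIPartitionOn (K : Type*) {V : Type*} [Field K] [AddCommGroup V] [Module K V]
    {M ℓ : ℕ} (φ : Fin M → V) (Ω : Finset (Fin M)) (F : Fin ℓ → Finset (Fin M)) : Prop :=
  (∀ i, (F i).Nonempty) ∧
  (∀ i j, i ≠ j → Disjoint (F i) (F j)) ∧
  (Finset.univ.biUnion F = Ω) ∧
  (∀ i, LinearIndependent K (fun x : {y : Fin M // y ∈ F i} => φ x.1)) ∧
  (∀ i j : Fin ℓ, i ≤ j → (F j).card ≤ (F i).card)

/-- A fundamental partition of the subfamily of `φ` indexed by `Ω`: an ordered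
partition into linearly independent sets whose size sequence is
lexicographically maximal among all such ordered partitions. -/
def IsFundamentalOn (K : Type*) {V : Type*} [Field K] [AddCommGroup V] [Module K V]
    {M ℓ : ℕ} (φ : Fin M → V) (Ω : Finset (Fin M)) (F : Fin ℓ → Finset (Fin M)) : Prop :=
  IsOrderedLIPartitionOn K φ Ω F ∧
  ∀ (k : ℕ) (P : Fin k → Finset (Fin M)),
    IsOrderedLIPartitionOn K φ Ω P → LexLE (PartSizes P) (PartSizes F)

open Finset Submodule Module Set

section Helpers
variable {K V : Type*} [Field K] [AddCommGroup V] [Module K V] {M : ℕ} {φ : Fin M → V}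

lemma li_iff {S : Finset (Fin M)} :
    LinearIndependent K (fun x : {y : Fin M // y ∈ S} => φ x.1) ↔
    ∀ l ∈ Finsupp.supported K K (↑S : Set (Fin M)), Finsupp.linearCombination K φ l = 0 → l = 0 :=
  linearIndepOn_iff (s := (↑S : Set (Fin M)))

lemma mem_sp_iff {S : Finset (Fin M)} {x : V} : x ∈ Submodule.span K (φ '' ↑S) ↔
    ∃ l ∈ Finsupp.supported K K (↑S : Set (Fin M)), Finsupp.linearCombination K φ l = x :=
  Finsupp.mem_span_image_iff_linearCombination K

lemma li_mono {S T : Finset (Fin M)} (hST : S ⊆ T)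
    (h : LinearIndependent K (fun x : {y : Fin M // y ∈ T} => φ x.1)) :
    LinearIndependent K (fun x : {y : Fin M // y ∈ S} => φ x.1) := by
  rw [li_iff] at h ⊢
  exact fun l hl => h l (hl.trans (Finset.coe_subset.2 hST))

lemma sp_mono {S T : Finset (Fin M)} (hST : S ⊆ T) :
    Submodule.span K (φ '' ↑S) ≤ Submodule.span K (φ '' ↑T) :=
  span_mono (Set.image_mono (Finset.coe_subset.2 hST))

lemma mem_sp {S : Finset (Fin M)} {x : Fin M} (hx : x ∈ S) :
    φ x ∈ Submodule.span K (φ '' ↑S) :=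
  subset_span ⟨x, by simpa using hx⟩

lemma finrank_sp {S : Finset (Fin M)}
    (h : LinearIndependent K (fun x : {y : Fin M // y ∈ S} => φ x.1)) :
    finrank K ↥(Submodule.span K (φ '' ↑S)) = S.card := by
  classical
  have := finrank_span_eq_card (R := K) h
  rw [Fintype.card_coe] at this
  rw [← this]
  have h2 : Set.range (fun x : {y : Fin M // y ∈ S} => φ x.1) = φ '' ↑S := by
    ext v
    simp [Set.mem_image]
  rw [h2]

end Helpers

section Helpers2
variable {K V : Type*} [Field K] [AddCommGroup V] [Module K V] {M : ℕ} {φ : Fin M → V}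

lemma rep_unique {S : Finset (Fin M)}
    (hLI : LinearIndependent K (fun x : {y : Fin M // y ∈ S} => φ x.1))
    {l l' : Fin M →₀ K} (hl : l ∈ Finsupp.supported K K (↑S : Set (Fin M)))
    (hl' : l' ∈ Finsupp.supported K K (↑S : Set (Fin M)))
    (h : Finsupp.linearCombination K φ l = Finsupp.linearCombination K φ l') : l = l' := by
  have h0 := li_iff.1 hLI (l - l')
    ((Finsupp.supported K K (↑S : Set (Fin M))).sub_mem hl hl')
    (by rw [map_sub, h, sub_self])
  exact sub_eq_zero.1 h0

open scoped Classical in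
lemma mem_sp_filter {S : Finset (Fin M)}
    (hLI : LinearIndependent K (fun x : {y : Fin M // y ∈ S} => φ x.1))
    {z : Fin M} (hz : φ z ∈ Submodule.span K (φ '' ↑S)) :
    φ z ∈ Submodule.span K (φ ''
      ↑(S.filter fun x => φ z ∉ Submodule.span K (φ '' ↑(S.erase x)))) := by
  classical
  obtain ⟨l, hl, hcomb⟩ := mem_sp_iff.1 hz
  refine mem_sp_iff.2 ⟨l, ?_, hcomb⟩
  intro x hx
  simp only [Finset.coe_filter, Set.mem_setOf_eq]
  have hxS : x ∈ S := hl hx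
  refine ⟨hxS, fun hmem => ?_⟩
  obtain ⟨l', hl', hcomb'⟩ := mem_sp_iff.1 hmem
  have hl'S : l' ∈ Finsupp.supported K K (↑S : Set (Fin M)) :=
    hl'.trans (Finset.coe_subset.2 (S.erase_subset x))
  have : l = l' := rep_unique hLI hl hl'S (by rw [hcomb, hcomb'])
  have hx0 : l' x = 0 := by
    by_contra hne
    have : x ∈ (↑(S.erase x) : Set (Fin M)) := hl' (Finsupp.mem_support_iff.2 hne)
    rw [Finset.mem_coe] at this
    exact (Finset.notMem_erase x S) this
  have hx' : l x ≠ 0 := by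
    rw [Finset.mem_coe, Finsupp.mem_support_iff] at hx
    exact hx
  exact hx' (by rw [this, hx0])

lemma exchange_span {S : Finset (Fin M)} {x z : Fin M}
    (hx : x ∈ S) (hzS : z ∉ S)
    (hz : φ z ∈ Submodule.span K (φ '' ↑S))
    (hnz : φ z ∉ Submodule.span K (φ '' ↑(S.erase x))) :
    Submodule.span K (φ '' ↑(insert z (S.erase x))) = Submodule.span K (φ '' ↑S) := by
  classical
  have hS : (↑S : Set (Fin M)) = insert x ↑(S.erase x) := by
    rw [← Finset.coe_insert, Finset.insert_erase hx]
  have himg : φ '' ↑S = insert (φ x) (φ '' ↑(S.erase x)) := by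
    rw [hS, Set.image_insert_eq]
  have hzmem : φ z ∈ Submodule.span K (insert (φ x) (φ '' ↑(S.erase x))) := by
    rwa [← himg]
  have hxmem : φ x ∈ Submodule.span K (insert (φ z) (φ '' ↑(S.erase x))) :=
    _root_.mem_span_insert_exchange hzmem hnz
  have himg2 : φ '' ↑(insert z (S.erase x)) = insert (φ z) (φ '' ↑(S.erase x)) := by
    rw [Finset.coe_insert, Set.image_insert_eq]
  apply le_antisymm
  · rw [himg2, Submodule.span_le, Set.insert_subset_iff]
    exact ⟨hz, Set.Subset.trans (Set.subset_insert _ _)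
      (by rw [← himg]; exact Submodule.subset_span)⟩
  · rw [himg, Submodule.span_le, Set.insert_subset_iff]
    refine ⟨by rwa [himg2], ?_⟩
    intro v hv
    apply Submodule.subset_span
    rw [himg2]
    exact Set.mem_insert_of_mem _ hv

lemma exchange_li {S : Finset (Fin M)} {x z : Fin M}
    (hLI : LinearIndependent K (fun y : {w : Fin M // w ∈ S} => φ y.1))
    (hx : x ∈ S) (hzS : z ∉ S)
    (hnz : φ z ∉ Submodule.span K (φ '' ↑(S.erase x))) :
    LinearIndependent K (fun y : {w : Fin M // w ∈ insert z (S.erase x)} => φ y.1) := by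
  classical
  rw [li_iff]
  intro l hl hcomb
  have hzer : z ∉ S.erase x := fun h => hzS (S.erase_subset x h)
  have hsplit : l = Finsupp.single z (l z) + l.erase z := (Finsupp.single_add_erase z l).symm
  have herase_supp : l.erase z ∈ Finsupp.supported K K (↑(S.erase x) : Set (Fin M)) := by
    intro a ha
    rw [Finset.mem_coe, Finsupp.support_erase, Finset.mem_erase] at ha
    obtain ⟨haz, ha⟩ := ha
    have : a ∈ (↑(insert z (S.erase x)) : Set (Fin M)) := hl ha
    simp only [Finset.coe_insert, Set.mem_insert_iff] at this
    exact this.resolve_left haz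
  have hcomb2 : l z • φ z + Finsupp.linearCombination K φ (l.erase z) = 0 := by
    rw [← Finsupp.linearCombination_single (R := K) (v := φ), ← map_add, ← hsplit, hcomb]
  have hz0 : l z = 0 := by
    by_contra hne
    apply hnz
    have hmem : Finsupp.linearCombination K φ (l.erase z)
        ∈ Submodule.span K (φ '' ↑(S.erase x)) :=
      mem_sp_iff.2 ⟨l.erase z, herase_supp, rfl⟩
    have heq : φ z = -((l z)⁻¹ • Finsupp.linearCombination K φ (l.erase z)) := by
      have h1 : l z • φ z = -(Finsupp.linearCombination K φ (l.erase z)) :=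
        eq_neg_of_add_eq_zero_left hcomb2
      have h2 : φ z = (l z)⁻¹ • (l z • φ z) := by
        rw [smul_smul, inv_mul_cancel₀ hne, one_smul]
      rw [h2, h1, smul_neg]
    rw [heq]
    exact Submodule.neg_mem _ (Submodule.smul_mem _ _ hmem)
  have : l ∈ Finsupp.supported K K (↑(S.erase x) : Set (Fin M)) := by
    rw [hsplit, hz0, Finsupp.single_zero, zero_add]
    exact herase_supp
  exact li_iff.1 (li_mono (S.erase_subset x) hLI) l this hcomb

end Helpers2

section Helpers3
variable {K V : Type*} [Field K] [AddCommGroup V] [Module K V] {M : ℕ} {φ : Fin M → V}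

lemma mem_sp_sdiff {S : Finset (Fin M)}
    (hLI : LinearIndependent K (fun x : {y : Fin M // y ∈ S} => φ x.1))
    {z : Fin M} (hz : φ z ∈ Submodule.span K (φ '' ↑S)) (G : Finset (Fin M))
    (hG : ∀ x ∈ G, φ z ∈ Submodule.span K (φ '' ↑(S.erase x))) :
    φ z ∈ Submodule.span K (φ '' ↑(S \ G)) := by
  classical
  refine sp_mono ?_ (mem_sp_filter hLI hz)
  intro x hx
  rw [Finset.mem_filter] at hx
  rw [Finset.mem_sdiff]
  exact ⟨hx.1, fun hxG => hx.2 (hG x hxG)⟩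

open scoped Classical in
lemma multi_exchange :
    ∀ (n : ℕ) (S : Finset (Fin M)) (D : Finset ℕ) (Y Z : ℕ → Fin M),
    D.card = n →
    LinearIndependent K (fun x : {y : Fin M // y ∈ S} => φ x.1) →
    Set.InjOn Y ↑D → Set.InjOn Z ↑D →
    (∀ t ∈ D, Y t ∈ S) → (∀ t ∈ D, Z t ∉ S) →
    (∀ t ∈ D, φ (Z t) ∈ Submodule.span K
      (φ '' ↑(S \ (D.filter (fun t' => t < t')).image Y))) →
    (∀ t ∈ D, φ (Z t) ∉ Submodule.span K (φ '' ↑(S.erase (Y t)))) →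
    Submodule.span K (φ '' ↑((S \ D.image Y) ∪ D.image Z)) = Submodule.span K (φ '' ↑S) ∧
    LinearIndependent K
      (fun x : {y : Fin M // y ∈ (S \ D.image Y) ∪ D.image Z} => φ x.1) ∧
    ((S \ D.image Y) ∪ D.image Z).card = S.card := by
  intro n
  induction n with
  | zero =>
    intro S D Y Z hcard hLI _ _ _ _ _ _
    rw [Finset.card_eq_zero] at hcard
    subst hcard
    have he : (S \ (∅ : Finset ℕ).image Y) ∪ (∅ : Finset ℕ).image Z = S := by simp
    rw [he]
    exact ⟨rfl, hLI, rfl⟩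
  | succ n ih =>
    intro S D Y Z hcard hLI hYinj hZinj hY hZ h1 h2
    have hDne : D.Nonempty := by
      rw [← Finset.card_pos, hcard]; omega
    set t₀ := D.min' hDne with ht₀def
    have ht₀D : t₀ ∈ D := D.min'_mem hDne
    set D' := D.erase t₀ with hD'def
    have hDins : D = insert t₀ D' := by rw [hD'def, Finset.insert_erase ht₀D]
    have hD'card : D'.card = n := by
      rw [hD'def, Finset.card_erase_of_mem ht₀D, hcard]
      omega
    have hYt₀S : Y t₀ ∈ S := hY t₀ ht₀D
    have hZt₀S : Z t₀ ∉ S := hZ t₀ ht₀D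
    set S' := insert (Z t₀) (S.erase (Y t₀)) with hS'def
    have hS'card : S'.card = S.card := by
      rw [hS'def, Finset.card_insert_of_notMem
        (fun h => hZt₀S (S.erase_subset _ h)), Finset.card_erase_of_mem hYt₀S]
      have : 1 ≤ S.card := Finset.card_pos.2 ⟨Y t₀, hYt₀S⟩
      omega
    have hZt₀sp : φ (Z t₀) ∈ Submodule.span K (φ '' ↑S) :=
      sp_mono (Finset.sdiff_subset) (h1 t₀ ht₀D)
    have hS'span : Submodule.span K (φ '' ↑S') = Submodule.span K (φ '' ↑S) :=
      exchange_span hYt₀S hZt₀S hZt₀sp (h2 t₀ ht₀D)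
    have hS'LI : LinearIndependent K (fun x : {y : Fin M // y ∈ S'} => φ x.1) :=
      exchange_li hLI hYt₀S hZt₀S (h2 t₀ ht₀D)
    have ht₀lt : ∀ t ∈ D', t₀ < t := by
      intro t ht
      rcases Finset.mem_erase.1 ht with ⟨hne, htD⟩
      exact lt_of_le_of_ne (D.min'_le t htD) (Ne.symm hne)
    have hYS' : ∀ t ∈ D', Y t ∈ S' := by
      intro t ht
      have htD : t ∈ D := Finset.mem_erase.1 ht |>.2
      have hne : Y t ≠ Y t₀ := fun h =>
        (Finset.mem_erase.1 ht).1 (hYinj htD ht₀D h)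
      exact Finset.mem_insert_of_mem (Finset.mem_erase.2 ⟨hne, hY t htD⟩)
    have hZS' : ∀ t ∈ D', Z t ∉ S' := by
      intro t ht hmem
      have htD : t ∈ D := Finset.mem_erase.1 ht |>.2
      rcases Finset.mem_insert.1 hmem with h | h
      · exact (Finset.mem_erase.1 ht).1 (hZinj htD ht₀D h)
      · exact hZ t htD (S.erase_subset _ h)
    have herase_span : ∀ t ∈ D', Submodule.span K (φ '' ↑(S'.erase (Y t)))
        = Submodule.span K (φ '' ↑(S.erase (Y t))) := by
      intro t ht
      have htD : t ∈ D := Finset.mem_erase.1 ht |>.2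
      have hne : Y t ≠ Y t₀ := fun h =>
        (Finset.mem_erase.1 ht).1 (hYinj htD ht₀D h)
      have hne' : Z t₀ ≠ Y t := fun h => hZt₀S (h ▸ hY t htD)
      have hset : S'.erase (Y t) = insert (Z t₀) ((S.erase (Y t)).erase (Y t₀)) := by
        ext a
        constructor
        · intro h
          rcases Finset.mem_erase.1 h with ⟨haYt, hmem⟩
          rcases Finset.mem_insert.1 hmem with h' | h'
          · exact Finset.mem_insert.2 (Or.inl h')
          · rcases Finset.mem_erase.1 h' with ⟨haYt₀, haS⟩
            exact Finset.mem_insert.2 (Or.inr (Finset.mem_erase.2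
              ⟨haYt₀, Finset.mem_erase.2 ⟨haYt, haS⟩⟩))
        · intro h
          rcases Finset.mem_insert.1 h with h' | h'
          · subst h'
            exact Finset.mem_erase.2 ⟨hne', Finset.mem_insert.2 (Or.inl rfl)⟩
          · rcases Finset.mem_erase.1 h' with ⟨haYt₀, h''⟩
            rcases Finset.mem_erase.1 h'' with ⟨haYt, haS⟩
            exact Finset.mem_erase.2 ⟨haYt, Finset.mem_insert.2
              (Or.inr (Finset.mem_erase.2 ⟨haYt₀, haS⟩))⟩
      rw [hset]
      apply exchange_span
      · exact Finset.mem_erase.2 ⟨Ne.symm hne, hYt₀S⟩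
      · exact fun h => hZt₀S (S.erase_subset _ h)
      · refine sp_mono ?_ (h1 t₀ ht₀D)
        intro a ha
        rcases Finset.mem_sdiff.1 ha with ⟨haS, hni⟩
        refine Finset.mem_erase.2 ⟨fun h => hni ?_, haS⟩
        subst h
        exact Finset.mem_image.2 ⟨t, Finset.mem_filter.2 ⟨htD, ht₀lt t ht⟩, rfl⟩
      · intro h
        apply h2 t₀ ht₀D
        refine sp_mono ?_ h
        intro a ha
        rcases Finset.mem_erase.1 ha with ⟨hne2, h''⟩
        rcases Finset.mem_erase.1 h'' with ⟨hne3, haS⟩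
        exact Finset.mem_erase.2 ⟨hne2, haS⟩
    have h2' : ∀ t ∈ D', φ (Z t) ∉ Submodule.span K (φ '' ↑(S'.erase (Y t))) := by
      intro t ht
      rw [herase_span t ht]
      exact h2 t (Finset.mem_erase.1 ht |>.2)
    have h1' : ∀ t ∈ D', φ (Z t) ∈ Submodule.span K
        (φ '' ↑(S' \ (D'.filter (fun t' => t < t')).image Y)) := by
      intro t ht
      have htD : t ∈ D := Finset.mem_erase.1 ht |>.2
      have hfilt : D'.filter (fun t' => t < t') = D.filter (fun t' => t < t') := by
        ext a
        simp only [hD'def, Finset.mem_filter, Finset.mem_erase]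
        constructor
        · rintro ⟨⟨_, h⟩, h'⟩; exact ⟨h, h'⟩
        · rintro ⟨h, h'⟩
          have hat₀ : a ≠ t₀ := by
            intro he; subst he
            have := ht₀lt t ht; omega
          exact ⟨⟨hat₀, h⟩, h'⟩
      set A := D.filter (fun t' => t < t') with hAdef
      have hYt₀A : Y t₀ ∉ A.image Y := by
        intro h
        rcases Finset.mem_image.1 h with ⟨a, ha, hae⟩
        have haD : a ∈ D := (Finset.mem_filter.1 ha).1
        have haeq : a = t₀ := hYinj haD ht₀D hae
        subst haeq
        have h5 := (Finset.mem_filter.1 ha).2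
        have h6 := ht₀lt t ht
        omega
      have hset : S' \ A.image Y = insert (Z t₀) ((S \ A.image Y).erase (Y t₀)) := by
        ext a
        constructor
        · intro h
          rcases Finset.mem_sdiff.1 h with ⟨hmem, hni⟩
          rcases Finset.mem_insert.1 hmem with h' | h'
          · exact Finset.mem_insert.2 (Or.inl h')
          · rcases Finset.mem_erase.1 h' with ⟨hne2, haS⟩
            exact Finset.mem_insert.2 (Or.inr (Finset.mem_erase.2
              ⟨hne2, Finset.mem_sdiff.2 ⟨haS, hni⟩⟩))
        · intro h
          rcases Finset.mem_insert.1 h with h' | h'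
          · subst h'
            refine Finset.mem_sdiff.2 ⟨Finset.mem_insert.2 (Or.inl rfl), fun hmem => ?_⟩
            rcases Finset.mem_image.1 hmem with ⟨b, hb, hbe⟩
            exact hZt₀S (hbe ▸ hY b (Finset.mem_filter.1 hb).1)
          · rcases Finset.mem_erase.1 h' with ⟨hne2, h''⟩
            rcases Finset.mem_sdiff.1 h'' with ⟨haS, hni⟩
            exact Finset.mem_sdiff.2 ⟨Finset.mem_insert.2
              (Or.inr (Finset.mem_erase.2 ⟨hne2, haS⟩)), hni⟩
      rw [hfilt, hset]
      have hG : Submodule.span K (φ '' ↑(insert (Z t₀) ((S \ A.image Y).erase (Y t₀))))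
          = Submodule.span K (φ '' ↑(S \ A.image Y)) := by
        apply exchange_span
        · exact Finset.mem_sdiff.2 ⟨hYt₀S, hYt₀A⟩
        · exact fun h => hZt₀S (Finset.mem_sdiff.1 h).1
        · refine sp_mono ?_ (h1 t₀ ht₀D)
          intro a ha
          rcases Finset.mem_sdiff.1 ha with ⟨haS, hni⟩
          refine Finset.mem_sdiff.2 ⟨haS, fun h => hni ?_⟩
          rcases Finset.mem_image.1 h with ⟨b, hb, hbe⟩
          rcases Finset.mem_filter.1 hb with ⟨hbD, hbt⟩
          refine Finset.mem_image.2 ⟨b, Finset.mem_filter.2 ⟨hbD, ?_⟩, hbe⟩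
          have := ht₀lt t ht
          omega
        · intro h
          apply h2 t₀ ht₀D
          refine sp_mono ?_ h
          intro a ha
          rcases Finset.mem_erase.1 ha with ⟨hne2, hS2⟩
          exact Finset.mem_erase.2 ⟨hne2, (Finset.mem_sdiff.1 hS2).1⟩
      rw [hG]
      exact h1 t htD
    have hYinj' : Set.InjOn Y ↑D' := hYinj.mono (by
      rw [hD'def]; exact Finset.coe_subset.2 (Finset.erase_subset _ _))
    have hZinj' : Set.InjOn Z ↑D' := hZinj.mono (by
      rw [hD'def]; exact Finset.coe_subset.2 (Finset.erase_subset _ _))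
    obtain ⟨ihspan, ihLI, ihcard⟩ :=
      ih S' D' Y Z hD'card hS'LI hYinj' hZinj' hYS' hZS' h1' h2'
    have hfinal : (S' \ D'.image Y) ∪ D'.image Z = (S \ D.image Y) ∪ D.image Z := by
      ext a
      constructor
      · intro h
        rcases Finset.mem_union.1 h with h | h
        · rcases Finset.mem_sdiff.1 h with ⟨hmem, hni⟩
          rcases Finset.mem_insert.1 hmem with h' | h'
          · subst h'
            exact Finset.mem_union.2 (Or.inr (Finset.mem_image.2 ⟨t₀, ht₀D, rfl⟩))
          · rcases Finset.mem_erase.1 h' with ⟨hne2, haS⟩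
            refine Finset.mem_union.2 (Or.inl (Finset.mem_sdiff.2 ⟨haS, fun hmem2 => ?_⟩))
            rcases Finset.mem_image.1 hmem2 with ⟨b, hb, hbe⟩
            by_cases hbt : b = t₀
            · subst hbt; exact hne2 hbe.symm
            · exact hni (Finset.mem_image.2 ⟨b, Finset.mem_erase.2 ⟨hbt, hb⟩, hbe⟩)
        · rcases Finset.mem_image.1 h with ⟨b, hb, hbe⟩
          exact Finset.mem_union.2 (Or.inr
            (Finset.mem_image.2 ⟨b, (Finset.mem_erase.1 hb).2, hbe⟩))
      · intro h
        rcases Finset.mem_union.1 h with h | h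
        · rcases Finset.mem_sdiff.1 h with ⟨haS, hni⟩
          have hane : a ≠ Y t₀ := fun he =>
            hni (he ▸ Finset.mem_image.2 ⟨t₀, ht₀D, rfl⟩)
          refine Finset.mem_union.2 (Or.inl (Finset.mem_sdiff.2
            ⟨Finset.mem_insert.2 (Or.inr (Finset.mem_erase.2 ⟨hane, haS⟩)),
              fun hmem => ?_⟩))
          rcases Finset.mem_image.1 hmem with ⟨b, hb, hbe⟩
          exact hni (Finset.mem_image.2 ⟨b, (Finset.mem_erase.1 hb).2, hbe⟩)
        · rcases Finset.mem_image.1 h with ⟨b, hb, rfl⟩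
          by_cases hbt : b = t₀
          · subst hbt
            refine Finset.mem_union.2 (Or.inl (Finset.mem_sdiff.2
              ⟨Finset.mem_insert.2 (Or.inl rfl), fun hmem => ?_⟩))
            rcases Finset.mem_image.1 hmem with ⟨c, hc, hce⟩
            exact hZt₀S (hce ▸ hY c (Finset.mem_erase.1 hc).2)
          · exact Finset.mem_union.2 (Or.inr
              (Finset.mem_image.2 ⟨b, Finset.mem_erase.2 ⟨hbt, hb⟩, rfl⟩))
    refine ⟨?_, ?_, ?_⟩
    · rw [← hfinal, ihspan, hS'span]
    · rw [← hfinal]; exact ihLI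
    · rw [← hfinal, ihcard, hS'card]

end Helpers3


section Count
variable {K V : Type*} [Field K] [AddCommGroup V] [Module K V] {M ℓ k : ℕ}
  {φ : Fin M → V} {F : Fin ℓ → Finset (Fin M)}

lemma transversal_count
    (hpart : IsOrderedLIPartitionOn K φ Finset.univ F) (hk : k < ℓ)
    (m : Fin M) (hm : m ∈ F ⟨ℓ - 1, by have := hpart; omega⟩) (S : Fin k → Finset (Fin M))
    (hS1 : ∀ i, S i ⊆ F (Fin.castLE hk.le i))
    (hS2 : ∀ i j, Submodule.span K (φ '' ↑(S i)) = Submodule.span K (φ '' ↑(S j)))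
    (hS3 : φ m ∈ Submodule.span K (φ '' ↑(Finset.univ.biUnion S))) :
    (insert m (Finset.univ.biUnion S)).card =
        k * Module.finrank K (Submodule.span K (φ '' ↑(Finset.univ.biUnion S))) + 1 ∧
    Module.finrank K (Submodule.span K (φ '' ↑(insert m (Finset.univ.biUnion S)))) =
        Module.finrank K (Submodule.span K (φ '' ↑(Finset.univ.biUnion S))) ∧
    k * Module.finrank K (Submodule.span K (φ '' ↑(insert m (Finset.univ.biUnion S)))) <
      (insert m (Finset.univ.biUnion S)).card := by
  classical
  obtain ⟨hne, hdisj, hcover, hLI, hmono⟩ := hpart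
  set T := Finset.univ.biUnion S with hTdef
  have hlast_ne : ∀ i : Fin k, (Fin.castLE hk.le i) ≠ (⟨ℓ - 1, by omega⟩ : Fin ℓ) := by
    intro i h
    have hi := i.2
    have : (Fin.castLE hk.le i).1 = ℓ - 1 := by rw [h]
    simp only [Fin.coe_castLE] at this
    omega
  have hmT : m ∉ T := by
    intro h
    rcases Finset.mem_biUnion.1 h with ⟨i, _, hi⟩
    exact Finset.disjoint_left.1 (hdisj _ _ (hlast_ne i)) (hS1 i hi) hm
  have hcard_insert : (insert m T).card = T.card + 1 :=
    Finset.card_insert_of_notMem hmT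
  have hspan_insert : Submodule.span K (φ '' ↑(insert m T)) =
      Submodule.span K (φ '' ↑T) := by
    rw [Finset.coe_insert, Set.image_insert_eq, Submodule.span_insert_eq_span hS3]
  have hLIS : ∀ i, LinearIndependent K (fun x : {y : Fin M // y ∈ S i} => φ x.1) :=
    fun i => li_mono (hS1 i) (hLI _)
  have hSdisj : ∀ i j : Fin k, i ≠ j → Disjoint (S i) (S j) := by
    intro i j hij
    refine Finset.disjoint_left.2 fun a hai haj => ?_
    have hij' : Fin.castLE hk.le i ≠ Fin.castLE hk.le j := by
      intro h
      apply hij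
      have := congrArg Fin.val h
      simp only [Fin.coe_castLE] at this
      exact Fin.ext this
    exact Finset.disjoint_left.1 (hdisj _ _ hij') (hS1 i hai) (hS1 j haj)
  have hTcardsum : T.card = ∑ i, (S i).card := Finset.card_biUnion
    (fun i _ j _ hij => hSdisj i j hij)
  have hTcard : T.card = k * Module.finrank K (Submodule.span K (φ '' ↑T)) := by
    rcases Nat.eq_zero_or_pos k with hk0 | hk0
    · subst hk0
      have : T = ∅ := by simp [hTdef]
      rw [this]
      simp
    · have hspanTi : ∀ i, Submodule.span K (φ '' ↑(S i)) =
          Submodule.span K (φ '' ↑T) := by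
        intro i
        apply le_antisymm
        · exact sp_mono (Finset.subset_biUnion_of_mem S (Finset.mem_univ i))
        · rw [Submodule.span_le]
          rintro v ⟨x, hx, rfl⟩
          rw [Finset.mem_coe, hTdef, Finset.mem_biUnion] at hx
          rcases hx with ⟨j, _, hxj⟩
          have : φ x ∈ Submodule.span K (φ '' ↑(S j)) := mem_sp hxj
          rw [hS2 j i] at this
          exact this
      have hcardS : ∀ i, (S i).card =
          Module.finrank K (Submodule.span K (φ '' ↑T)) := by
        intro i
        rw [← finrank_sp (hLIS i), hspanTi i]
      rw [hTcardsum]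
      rw [Finset.sum_congr rfl (fun i _ => hcardS i), Finset.sum_const,
        Finset.card_univ, Fintype.card_fin, smul_eq_mul]
  refine ⟨by rw [hcard_insert, hTcard], by rw [hspan_insert], ?_⟩
  rw [hspan_insert, ← hTcard, hcard_insert]
  omega

end Count

section Graph
variable (K : Type*) {V : Type*} [Field K] [AddCommGroup V] [Module K V] {M ℓ : ℕ}

/-- `z` can kick `x` out of `x`'s (non-last) block. -/
def ArcRel (φ : Fin M → V) (F : Fin ℓ → Finset (Fin M)) (last : Fin ℓ)
    (z x : Fin M) : Prop :=
  ∃ i : Fin ℓ, i ≠ last ∧ x ∈ F i ∧ φ z ∈ Submodule.span K (φ '' ↑(F i)) ∧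
    φ z ∉ Submodule.span K (φ '' ↑((F i).erase x))

/-- `y` can enter some non-last block without kicking. -/
def FreeV (φ : Fin M → V) (F : Fin ℓ → Finset (Fin M)) (last : Fin ℓ)
    (y : Fin M) : Prop :=
  ∃ i : Fin ℓ, i ≠ last ∧ φ y ∉ Submodule.span K (φ '' ↑(F i))

end Graph

inductive ReachRel {M : ℕ} (Arc : Fin M → Fin M → Prop) (m : Fin M) : Fin M → Prop
  | base : ReachRel Arc m m
  | step {z x : Fin M} : ReachRel Arc m z → Arc z x → ReachRel Arc m x

lemma reach_path {M : ℕ} {Arc : Fin M → Fin M → Prop} {m y : Fin M}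
    (h : ReachRel Arc m y) :
    ∃ (n : ℕ) (p : ℕ → Fin M), p 0 = m ∧ p n = y ∧ ∀ t < n, Arc (p t) (p (t + 1)) := by
  induction h with
  | base => exact ⟨0, fun _ => m, rfl, rfl, by omega⟩
  | @step z x hr ha ih =>
    obtain ⟨n, p, h0, hn, hA⟩ := ih
    refine ⟨n + 1, fun t => if t ≤ n then p t else x, by simp [h0], by simp, ?_⟩
    intro t ht
    rcases Nat.lt_or_ge t n with h' | h'
    · simp only [if_pos (le_of_lt h'), if_pos (Nat.succ_le_of_lt h')]
      exact hA t h'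
    · have htn : t = n := by omega
      subst htn
      simp only [if_pos (le_refl t), if_neg (by omega : ¬ t + 1 ≤ t)]
      rw [hn]
      exact ha

section Ins
variable {K V : Type*} [Field K] [AddCommGroup V] [Module K V] {M : ℕ} {φ : Fin M → V}

lemma li_insert {S : Finset (Fin M)}
    (hLI : LinearIndependent K (fun x : {y : Fin M // y ∈ S} => φ x.1))
    {z : Fin M} (hz : φ z ∉ Submodule.span K (φ '' ↑S)) (hzS : z ∉ S) :
    LinearIndependent K (fun x : {y : Fin M // y ∈ insert z S} => φ x.1) := by
  classical
  rw [li_iff]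
  intro l hl hcomb
  have hsplit : l = Finsupp.single z (l z) + l.erase z := (Finsupp.single_add_erase z l).symm
  have herase_supp : l.erase z ∈ Finsupp.supported K K (↑S : Set (Fin M)) := by
    intro a ha
    rw [Finset.mem_coe, Finsupp.support_erase, Finset.mem_erase] at ha
    obtain ⟨haz, ha⟩ := ha
    have : a ∈ (↑(insert z S) : Set (Fin M)) := hl ha
    simp only [Finset.coe_insert, Set.mem_insert_iff] at this
    exact this.resolve_left haz
  have hcomb2 : l z • φ z + Finsupp.linearCombination K φ (l.erase z) = 0 := by
    rw [← Finsupp.linearCombination_single (R := K) (v := φ), ← map_add, ← hsplit, hcomb]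
  have hz0 : l z = 0 := by
    by_contra hne
    apply hz
    have hmem : Finsupp.linearCombination K φ (l.erase z)
        ∈ Submodule.span K (φ '' ↑S) := mem_sp_iff.2 ⟨l.erase z, herase_supp, rfl⟩
    have h1 : l z • φ z = -(Finsupp.linearCombination K φ (l.erase z)) :=
      eq_neg_of_add_eq_zero_left hcomb2
    have h2 : φ z = (l z)⁻¹ • (l z • φ z) := by
      rw [smul_smul, inv_mul_cancel₀ hne, one_smul]
    rw [h2, h1, smul_neg]
    exact Submodule.neg_mem _ (Submodule.smul_mem _ _ hmem)
  have hsupp : l ∈ Finsupp.supported K K (↑S : Set (Fin M)) := by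
    rw [hsplit, hz0, Finsupp.single_zero, zero_add]
    exact herase_supp
  exact li_iff.1 hLI l hsupp hcomb

end Ins

lemma lex_false {a b : ℕ → ℕ} {u : ℕ} (h1 : ∀ j < u, a j = b j) (h2 : b u < a u) :
    ¬ LexLE a b := by
  rintro (h | ⟨n, hn, hlt⟩)
  · rw [h] at h2; omega
  · rcases Nat.lt_trichotomy n u with h' | h' | h'
    · rw [h1 n h'] at hlt; omega
    · subst h'; omega
    · rw [hn u h'] at h2; omega

section ArcIff
variable {K : Type*} {V : Type*} [Field K] [AddCommGroup V] [Module K V] {M ℓ : ℕ}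
  {φ : Fin M → V} {F : Fin ℓ → Finset (Fin M)} {last : Fin ℓ} {z x y : Fin M}

lemma arcRel_iff : ArcRel K φ F last z x ↔
    ∃ i : Fin ℓ, i ≠ last ∧ x ∈ F i ∧ φ z ∈ Submodule.span K (φ '' ↑(F i)) ∧
      φ z ∉ Submodule.span K (φ '' ↑((F i).erase x)) := Iff.rfl

lemma freeV_iff : FreeV K φ F last y ↔
    ∃ i : Fin ℓ, i ≠ last ∧ φ y ∉ Submodule.span K (φ '' ↑(F i)) := Iff.rfl

end ArcIff

section Improve
variable {K V : Type*} [Field K] [AddCommGroup V] [Module K V] {M ℓ : ℕ}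
  {φ : Fin M → V} {F : Fin ℓ → Finset (Fin M)}

set_option maxHeartbeats 1000000 in
open scoped Classical in
lemma improve_false (hF : IsFundamentalOn K φ Finset.univ F) (hℓ : 2 ≤ ℓ)
    (m : Fin M) (hm : m ∈ F ⟨ℓ - 1, by omega⟩) (q : ℕ) (p : ℕ → Fin M)
    (hp0 : p 0 = m)
    (harc : ∀ t < q, ArcRel K φ F ⟨ℓ - 1, by omega⟩ (p t) (p (t + 1)))
    (hfree : FreeV K φ F ⟨ℓ - 1, by omega⟩ (p q))
    (hmin : ∀ n < q, ∀ p' : ℕ → Fin M, p' 0 = m →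
      (∀ t < n, ArcRel K φ F ⟨ℓ - 1, by omega⟩ (p' t) (p' (t + 1))) →
      ¬ FreeV K φ F ⟨ℓ - 1, by omega⟩ (p' n)) : False := by
  classical
  obtain ⟨⟨hne, hdisj, hcover, hLI, hmono⟩, hmax⟩ := hF
  set last : Fin ℓ := ⟨ℓ - 1, by omega⟩ with hlastdef
  have uniq : ∀ {x : Fin M} {i j : Fin ℓ}, x ∈ F i → x ∈ F j → i = j := by
    intro x i j hxi hxj
    by_contra h
    exact Finset.disjoint_left.1 (hdisj i j h) hxi hxj
  -- injectivity of p on [0, q]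
  have hinj : ∀ a b, a < b → b ≤ q → p a ≠ p b := by
    intro a b hab hbq heq
    rcases Nat.lt_or_ge b q with hbq' | hbq'
    · set δ := b - a with hδ
      have hδ1 : 1 ≤ δ := by omega
      refine hmin (q - δ) (by omega) (fun s => if s ≤ a then p s else p (s + δ))
        (by simp [hp0]) ?_ ?_
      · intro t ht
        by_cases h1 : t < a
        · simp only [if_pos (by omega : t ≤ a), if_pos (by omega : t + 1 ≤ a)]
          exact harc t (by omega)
        · by_cases h2 : t = a
          · subst h2
            simp only [if_pos (le_refl t), if_neg (by omega : ¬ t + 1 ≤ t)]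
            have h4 : t + 1 + δ = b + 1 := by omega
            rw [h4, heq]
            exact harc b (by omega)
          · simp only [if_neg (by omega : ¬ t ≤ a), if_neg (by omega : ¬ t + 1 ≤ a)]
            have h4 : t + 1 + δ = t + δ + 1 := by omega
            rw [h4]
            exact harc (t + δ) (by omega)
      · have h3 : ¬ (q - δ ≤ a) := by omega
        simp only [if_neg h3]
        have h4 : q - δ + δ = q := by omega
        rw [h4]
        exact hfree
    · have hbq2 : b = q := by omega
      subst hbq2
      exact hmin a (by omega) p hp0 (fun t ht => harc t (by omega)) (by rw [heq]; exact hfree)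
  have hshort : ∀ a b, a + 1 < b → b ≤ q → ¬ ArcRel K φ F last (p a) (p b) := by
    intro a b hab hbq harc2
    set δ := b - (a + 1) with hδ
    have hδ1 : 1 ≤ δ := by omega
    refine hmin (q - δ) (by omega) (fun s => if s ≤ a then p s else p (s + δ))
      (by simp [hp0]) ?_ ?_
    · intro t ht
      by_cases h1 : t < a
      · simp only [if_pos (by omega : t ≤ a), if_pos (by omega : t + 1 ≤ a)]
        exact harc t (by omega)
      · by_cases h2 : t = a
        · subst h2
          simp only [if_pos (le_refl t), if_neg (by omega : ¬ t + 1 ≤ t)]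
          have h4 : t + 1 + δ = b := by omega
          rw [h4]
          exact harc2
        · simp only [if_neg (by omega : ¬ t ≤ a), if_neg (by omega : ¬ t + 1 ≤ a)]
          have h4 : t + 1 + δ = t + δ + 1 := by omega
          rw [h4]
          exact harc (t + δ) (by omega)
    · have h3 : ¬ (q - δ ≤ a) := by omega
      simp only [if_neg h3]
      have h4 : q - δ + δ = q := by omega
      rw [h4]
      exact hfree
  obtain ⟨istar, histar_ne, histar_free⟩ := freeV_iff.1 hfree
  have hparc : ∀ t, 1 ≤ t → t ≤ q → ArcRel K φ F last (p (t - 1)) (p t) := by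
    intro t h1 h2
    have h3 := harc (t - 1) (by omega)
    have h4 : t - 1 + 1 = t := by omega
    rwa [h4] at h3
  set Kk : Fin ℓ → Finset ℕ := fun i => (Finset.Icc 1 q).filter (fun t => p t ∈ F i)
    with hKdef
  have hKmem : ∀ {i : Fin ℓ} {t : ℕ}, t ∈ Kk i ↔ (1 ≤ t ∧ t ≤ q ∧ p t ∈ F i) := by
    intro i t
    rw [hKdef]
    simp only [Finset.mem_filter, Finset.mem_Icc]
    tauto
  have harc_i : ∀ {i : Fin ℓ} {t : ℕ}, t ∈ Kk i → i ≠ last ∧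
      φ (p (t - 1)) ∈ Submodule.span K (φ '' ↑(F i)) ∧
      φ (p (t - 1)) ∉ Submodule.span K (φ '' ↑((F i).erase (p t))) := by
    intro i t ht
    obtain ⟨h1, h2, h3⟩ := hKmem.1 ht
    obtain ⟨j, hj1, hj2, hj3, hj4⟩ := arcRel_iff.1 (hparc t h1 h2)
    have hji : j = i := uniq hj2 h3
    subst hji
    exact ⟨hj1, hj3, hj4⟩
  set X : Finset (Fin M) := (Finset.Icc 0 q).image p with hXdef
  set E : Fin ℓ → Finset (Fin M) := fun i =>
    (Kk i).image (fun t => p (t - 1)) ∪ (if i = istar then {p q} else ∅) with hEdef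
  set Q : Fin ℓ → Finset (Fin M) := fun i => (F i \ X) ∪ E i with hQdef
  set N : Fin ℓ → Finset (Fin M) := fun i =>
    (F i \ (Kk i).image p) ∪ (Kk i).image (fun t => p (t - 1)) with hNdef
  have hME : ∀ i : Fin ℓ, i ≠ last →
      Submodule.span K (φ '' ↑(N i)) = Submodule.span K (φ '' ↑(F i)) ∧
      LinearIndependent K (fun x : {y : Fin M // y ∈ N i} => φ x.1) ∧
      (N i).card = (F i).card := by
    intro i hi
    refine multi_exchange (Kk i).card (F i) (Kk i) p (fun t => p (t - 1)) rfl (hLI i)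
      ?_ ?_ ?_ ?_ ?_ ?_
    · intro a ha b hb hab
      rw [Finset.mem_coe] at ha hb
      obtain ⟨ha1, ha2, _⟩ := hKmem.1 ha
      obtain ⟨hb1, hb2, _⟩ := hKmem.1 hb
      by_contra hne2
      rcases Nat.lt_or_ge a b with h | h
      · exact hinj a b h hb2 hab
      · exact hinj b a (by omega) ha2 hab.symm
    · intro a ha b hb hab
      rw [Finset.mem_coe] at ha hb
      obtain ⟨ha1, ha2, _⟩ := hKmem.1 ha
      obtain ⟨hb1, hb2, _⟩ := hKmem.1 hb
      by_contra hne2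
      rcases Nat.lt_trichotomy (a - 1) (b - 1) with h | h | h
      · exact hinj (a - 1) (b - 1) h (by omega) hab
      · omega
      · exact hinj (b - 1) (a - 1) h (by omega) hab.symm
    · intro t ht
      exact (hKmem.1 ht).2.2
    · intro t ht hmem
      obtain ⟨h1, h2, h3⟩ := hKmem.1 ht
      have hne2 : p (t - 1) ≠ p t := hinj (t - 1) t (by omega) h2
      exact (harc_i ht).2.2 (mem_sp (Finset.mem_erase.2 ⟨hne2, hmem⟩))
    · intro t ht
      obtain ⟨h1, h2, h3⟩ := hKmem.1 ht
      refine mem_sp_sdiff (hLI i) (harc_i ht).2.1 _ ?_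
      intro x hx
      rcases Finset.mem_image.1 hx with ⟨t', ht', rfl⟩
      rcases Finset.mem_filter.1 ht' with ⟨ht'K, htt'⟩
      obtain ⟨h1', h2', h3'⟩ := hKmem.1 ht'K
      by_contra hc
      refine hshort (t - 1) t' (by omega) h2' ?_
      exact arcRel_iff.2 ⟨i, hi, h3', (harc_i ht).2.1, hc⟩
    · intro t ht
      exact (harc_i ht).2.2
  have hlastmem : ∀ t, 1 ≤ t → t ≤ q → p t ∉ F last := by
    intro t h1 h2 hmem
    obtain ⟨j, hj1, hj2, _, _⟩ := arcRel_iff.1 (hparc t h1 h2)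
    exact hj1 (uniq hj2 hmem)
  have hFX : ∀ i : Fin ℓ, i ≠ last → F i \ X = F i \ (Kk i).image p := by
    intro i hi
    ext a
    simp only [Finset.mem_sdiff]
    constructor
    · rintro ⟨haF, haX⟩
      refine ⟨haF, fun hc => haX ?_⟩
      rcases Finset.mem_image.1 hc with ⟨t, ht, rfl⟩
      obtain ⟨h1, h2, _⟩ := hKmem.1 ht
      rw [hXdef]
      exact Finset.mem_image.2 ⟨t, Finset.mem_Icc.2 ⟨by omega, h2⟩, rfl⟩
    · rintro ⟨haF, haK⟩
      refine ⟨haF, fun hc => ?_⟩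
      rw [hXdef] at hc
      rcases Finset.mem_image.1 hc with ⟨t, ht, rfl⟩
      rcases Finset.mem_Icc.1 ht with ⟨_, h2⟩
      by_cases h0 : t = 0
      · subst h0
        rw [hp0] at haF
        exact hi (uniq haF hm)
      · exact haK (Finset.mem_image.2 ⟨t, hKmem.2 ⟨by omega, h2, haF⟩, rfl⟩)
  have hKlast : Kk last = ∅ := by
    ext t
    simp only [Finset.notMem_empty, iff_false]
    intro ht
    obtain ⟨h1, h2, h3⟩ := hKmem.1 ht
    exact hlastmem t h1 h2 h3
  have hQlast : Q last = (F last).erase m := by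
    have hE0 : E last = ∅ := by
      rw [hEdef]
      simp only
      rw [hKlast, if_neg (fun h => histar_ne h.symm)]
      simp
    show (F last \ X) ∪ E last = (F last).erase m
    rw [hE0, Finset.union_empty]
    ext a
    simp only [Finset.mem_sdiff, Finset.mem_erase]
    constructor
    · rintro ⟨haF, haX⟩
      refine ⟨fun he => haX ?_, haF⟩
      subst he
      rw [hXdef]
      exact Finset.mem_image.2 ⟨0, Finset.mem_Icc.2 ⟨le_refl 0, Nat.zero_le q⟩, hp0⟩
    · rintro ⟨hne2, haF⟩
      refine ⟨haF, fun hc => ?_⟩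
      rw [hXdef] at hc
      rcases Finset.mem_image.1 hc with ⟨t, ht, rfl⟩
      rcases Finset.mem_Icc.1 ht with ⟨_, h2⟩
      by_cases h0 : t = 0
      · subst h0; exact hne2 hp0
      · exact hlastmem t (by omega) h2 haF
  have hpq_not : p q ∉ F istar := fun h => histar_free (mem_sp h)
  have hQeq : ∀ i : Fin ℓ, i ≠ last → i ≠ istar → Q i = N i := by
    intro i h1 h2
    show (F i \ X) ∪ E i = N i
    have hE1 : E i = (Kk i).image (fun t => p (t - 1)) := by
      show (Kk i).image (fun t => p (t - 1)) ∪ (if i = istar then {p q} else ∅) = _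
      rw [if_neg h2]
      simp
    rw [hE1, hFX i h1]
  have hQistar : Q istar = insert (p q) (N istar) := by
    show (F istar \ X) ∪ E istar = insert (p q) (N istar)
    have hE1 : E istar = (Kk istar).image (fun t => p (t - 1)) ∪ {p q} := by
      show _ ∪ (if istar = istar then {p q} else ∅) = _
      rw [if_pos rfl]
    rw [hE1, hFX istar histar_ne, hNdef]
    ext a
    simp only [Finset.mem_union, Finset.mem_insert, Finset.mem_singleton]
    tauto
  have hpqN : p q ∉ N istar := by
    intro hc
    rcases Finset.mem_union.1 hc with hc | hc
    · exact hpq_not (Finset.mem_sdiff.1 hc).1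
    · rcases Finset.mem_image.1 hc with ⟨t, ht, he⟩
      obtain ⟨h1, h2, _⟩ := hKmem.1 ht
      exact hinj (t - 1) q (by omega) (le_refl q) he
  have hLIQ : ∀ i, LinearIndependent K (fun x : {y : Fin M // y ∈ Q i} => φ x.1) := by
    intro i
    by_cases h1 : i = last
    · subst h1
      rw [hQlast]
      exact li_mono (Finset.erase_subset _ _) (hLI last)
    · by_cases h2 : i = istar
      · rw [h2, hQistar]
        refine li_insert ((hME istar histar_ne).2.1) ?_ hpqN
        rw [(hME istar histar_ne).1]
        exact histar_free
      · rw [hQeq i h1 h2]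
        exact (hME i h1).2.1
  have hcards : ∀ i, i ≠ last → i ≠ istar → (Q i).card = (F i).card := by
    intro i h1 h2
    rw [hQeq i h1 h2]
    exact (hME i h1).2.2
  have hcardistar : (Q istar).card = (F istar).card + 1 := by
    rw [hQistar, Finset.card_insert_of_notMem hpqN, (hME istar histar_ne).2.2]
  have hcardlast : (Q last).card = (F last).card - 1 := by
    rw [hQlast, Finset.card_erase_of_mem hm]
  have hEX : ∀ i, E i ⊆ X := by
    intro i a ha
    rcases Finset.mem_union.1 ha with ha | ha
    · rcases Finset.mem_image.1 ha with ⟨t, ht, rfl⟩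
      obtain ⟨h1, h2, _⟩ := hKmem.1 ht
      rw [hXdef]
      exact Finset.mem_image.2 ⟨t - 1, Finset.mem_Icc.2 ⟨Nat.zero_le _, by omega⟩, rfl⟩
    · split_ifs at ha with hii
      · rw [Finset.mem_singleton] at ha
        subst ha
        rw [hXdef]
        exact Finset.mem_image.2 ⟨q, Finset.mem_Icc.2 ⟨Nat.zero_le _, le_refl q⟩, rfl⟩
      · exact absurd ha (Finset.notMem_empty _)
  have hEchar : ∀ (i' : Fin ℓ) (a' : Fin M), a' ∈ E i' →
      (∃ t, t ∈ Kk i' ∧ p (t - 1) = a') ∨ (i' = istar ∧ a' = p q) := by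
    intro i' a' ha'
    rcases Finset.mem_union.1 ha' with h | h
    · rcases Finset.mem_image.1 h with ⟨t, ht, he⟩
      exact Or.inl ⟨t, ht, he⟩
    · split_ifs at h with hii
      · exact Or.inr ⟨hii, Finset.mem_singleton.1 h⟩
      · exact absurd h (Finset.notMem_empty _)
  have hQdisj : ∀ i j, i ≠ j → Disjoint (Q i) (Q j) := by
    intro i j hij
    rw [Finset.disjoint_left]
    intro a hai haj
    rcases Finset.mem_union.1 hai with h1 | h1 <;> rcases Finset.mem_union.1 haj with h2 | h2
    · exact hij (uniq (Finset.mem_sdiff.1 h1).1 (Finset.mem_sdiff.1 h2).1)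
    · exact (Finset.mem_sdiff.1 h1).2 (hEX j h2)
    · exact (Finset.mem_sdiff.1 h2).2 (hEX i h1)
    · rcases hEchar i a h1 with ⟨t, ht, he⟩ | ⟨hii, he⟩ <;>
        rcases hEchar j a h2 with ⟨t', ht', he'⟩ | ⟨hjj, he'⟩
      · obtain ⟨ha1, ha2, ha3⟩ := hKmem.1 ht
        obtain ⟨hb1, hb2, hb3⟩ := hKmem.1 ht'
        have htt : t = t' := by
          by_contra hc
          rcases Nat.lt_trichotomy (t - 1) (t' - 1) with h | h | h
          · exact hinj _ _ h (by omega) (he.trans he'.symm)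
          · omega
          · exact hinj _ _ h (by omega) (he'.trans he.symm)
        subst htt
        exact hij (uniq ha3 hb3)
      · obtain ⟨ha1, ha2, _⟩ := hKmem.1 ht
        exact hinj (t - 1) q (by omega) (le_refl _) (he.trans he'.symm.symm ▸ rfl)
      · obtain ⟨ha1, ha2, _⟩ := hKmem.1 ht'
        exact hinj (t' - 1) q (by omega) (le_refl _) (he'.trans he.symm.symm ▸ rfl)
      · exact hij (hii.trans hjj.symm)
  have hQcover : Finset.univ.biUnion Q = Finset.univ := by
    apply Finset.eq_univ_of_forall
    intro a
    rw [Finset.mem_biUnion]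
    by_cases haX : a ∈ X
    · rw [hXdef] at haX
      rcases Finset.mem_image.1 haX with ⟨t, ht, rfl⟩
      rcases Finset.mem_Icc.1 ht with ⟨_, h2⟩
      by_cases htq : t = q
      · refine ⟨istar, Finset.mem_univ _, Finset.mem_union.2 (Or.inr ?_)⟩
        show p t ∈ (Kk istar).image (fun t => p (t - 1)) ∪
          (if istar = istar then {p q} else ∅)
        rw [if_pos rfl, htq]
        exact Finset.mem_union_right _ (Finset.mem_singleton_self _)
      · obtain ⟨j, hj1, hj2, _, _⟩ := arcRel_iff.1 (hparc (t + 1) (by omega) (by omega))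
        refine ⟨j, Finset.mem_univ _, Finset.mem_union.2 (Or.inr
          (Finset.mem_union_left _ (Finset.mem_image.2
            ⟨t + 1, hKmem.2 ⟨by omega, by omega, hj2⟩, by simp⟩)))⟩
    · have hmem : a ∈ Finset.univ.biUnion F := by
        rw [hcover]; exact Finset.mem_univ a
      rcases Finset.mem_biUnion.1 hmem with ⟨i, _, hi⟩
      exact ⟨i, Finset.mem_univ _, Finset.mem_union.2 (Or.inl
        (Finset.mem_sdiff.2 ⟨hi, haX⟩))⟩
  -- position u: first index whose block has the same size as F istar
  have histar_lt : istar.1 < ℓ - 1 := by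
    have h5 := istar.2
    rcases Nat.lt_trichotomy istar.1 (ℓ - 1) with h | h | h
    · exact h
    · exact absurd (Fin.ext h) histar_ne
    · omega
  have hu_ex : ∃ j, ∃ h : j < ℓ, (F ⟨j, h⟩).card = (F istar).card :=
    ⟨istar.1, istar.2, by rw [Fin.eta]⟩
  set u := Nat.find hu_ex with hudef
  obtain ⟨hu_lt, hu_eq⟩ := Nat.find_spec hu_ex
  have hu_le : u ≤ istar.1 := Nat.find_le ⟨istar.2, by rw [Fin.eta]⟩
  have hu_gt : ∀ j (h : j < ℓ), j < u → (F istar).card + 1 ≤ (F ⟨j, h⟩).card := by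
    intro j h hj
    have h5 : (F istar).card ≤ (F ⟨j, h⟩).card := by
      refine hmono ⟨j, h⟩ istar ?_
      rw [Fin.le_def]
      simp only
      omega
    have h6 := Nat.find_min hu_ex hj
    push_neg at h6
    have h7 := h6 h
    omega
  set uF : Fin ℓ := ⟨u, by omega⟩ with huFdef
  have huF_ne_last : uF ≠ last := by
    intro h
    have h5 : u = ℓ - 1 := congrArg Fin.val h
    omega
  have hcard_uF : (F uF).card = (F istar).card := hu_eq
  set σ := Equiv.swap uF istar with hσdef
  have hσ_last : σ last = last :=
    Equiv.swap_apply_of_ne_of_ne (fun h => huF_ne_last h.symm) (fun h => histar_ne h.symm)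
  have hσ_ne_last : ∀ j : Fin ℓ, j ≠ last → σ j ≠ last := by
    intro j hj hc
    have : j = last := by
      have := σ.injective (hc.trans hσ_last.symm)
      exact this
    exact hj this
  have hlast_min : ∀ i : Fin ℓ, (F last).card ≤ (F i).card := by
    intro i
    refine hmono i last ?_
    rw [Fin.le_def]
    have := i.2
    simp only [hlastdef]
    omega
  have hcardP : ∀ j : Fin ℓ, (Q (σ j)).card =
      if j = uF then (F istar).card + 1
      else if j = last then (F last).card - 1 else (F j).card := by
    intro j
    by_cases h1 : j = uF
    · have h5 : σ j = istar := by rw [h1]; exact Equiv.swap_apply_left _ _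
      rw [if_pos h1, h5]
      exact hcardistar
    · rw [if_neg h1]
      by_cases h2 : j = last
      · have h5 : σ j = last := by rw [h2]; exact hσ_last
        rw [if_pos h2, h5]
        exact hcardlast
      · rw [if_neg h2]
        by_cases h3 : j = istar
        · have h5 : σ j = uF := by rw [h3]; exact Equiv.swap_apply_right _ _
          have huFi : uF ≠ istar := fun h => h1 (h3.trans h.symm)
          rw [h5, hcards uF huF_ne_last huFi, hcard_uF, ← h3]
        · have h5 : σ j = j := Equiv.swap_apply_of_ne_of_ne h1 h3
          rw [h5]
          exact hcards j h2 h3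
  have hQu : (Q (σ uF)).card = (F istar).card + 1 := by
    rw [hcardP uF, if_pos rfl]
  have hu_lt_l1 : u < ℓ - 1 := by omega
  rcases Nat.lt_or_ge 1 (F last).card with hbig | hsmall
  · -- CASE A : last block has at least two elements
    set P : Fin ℓ → Finset (Fin M) := fun j => Q (σ j) with hPdef
    have hP : IsOrderedLIPartitionOn K φ Finset.univ P := by
      refine ⟨?_, ?_, ?_, ?_, ?_⟩
      · intro j
        rw [← Finset.card_pos]
        show 0 < (Q (σ j)).card
        rw [hcardP j]
        split_ifs with h1 h2
        · omega
        · omega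
        · exact Finset.card_pos.2 (hne j)
      · intro i j hij
        exact hQdisj _ _ (fun h => hij (σ.injective h))
      · apply Finset.eq_univ_of_forall
        intro a
        have hmem : a ∈ Finset.univ.biUnion Q := by
          rw [hQcover]; exact Finset.mem_univ a
        rcases Finset.mem_biUnion.1 hmem with ⟨i, _, hi⟩
        rw [Finset.mem_biUnion]
        refine ⟨σ.symm i, Finset.mem_univ _, ?_⟩
        show a ∈ Q (σ (σ.symm i))
        rw [Equiv.apply_symm_apply]
        exact hi
      · intro i
        exact hLIQ (σ i)
      · intro i j hij
        have hijv : (i : ℕ) ≤ (j : ℕ) := hij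
        have hFji : (F j).card ≤ (F i).card := hmono i j hij
        show (Q (σ j)).card ≤ (Q (σ i)).card
        rw [hcardP i, hcardP j]
        by_cases h1 : j = uF
        · rw [if_pos h1]
          by_cases h3 : i = uF
          · rw [if_pos h3]
          · rw [if_neg h3]
            have hju : (j : ℕ) = u := by rw [h1]
            have hiu : (i : ℕ) < u := by
              have h5 : (i : ℕ) ≠ u := fun h => h3 (Fin.ext h)
              omega
            have hi_last : i ≠ last := by
              intro h4
              have h5 : (i : ℕ) = ℓ - 1 := by rw [h4]
              omega
            rw [if_neg hi_last]
            have h6 := hu_gt i.1 i.2 hiu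
            rw [Fin.eta] at h6
            exact h6
        · rw [if_neg h1]
          by_cases h2 : j = last
          · rw [if_pos h2]
            by_cases h3 : i = uF
            · rw [if_pos h3]
              have := hlast_min istar
              omega
            · rw [if_neg h3]
              by_cases h4 : i = last
              · rw [if_pos h4]
              · rw [if_neg h4]
                have := hlast_min i
                omega
          · rw [if_neg h2]
            by_cases h3 : i = uF
            · rw [if_pos h3]
              have h5 : (F i).card = (F istar).card := by rw [h3]; exact hcard_uF
              omega
            · rw [if_neg h3]
              by_cases h4 : i = last
              · exfalso
                apply h2
                apply Fin.ext
                have h5 : (i : ℕ) = ℓ - 1 := by rw [h4]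
                have h6 := j.2
                show (j : ℕ) = ℓ - 1
                omega
              · rw [if_neg h4]
                exact hFji
    have hlex := hmax ℓ P hP
    refine lex_false (u := u) ?_ ?_ hlex
    · intro j hj
      have hjl : j < ℓ := by omega
      show PartSizes P j = PartSizes F j
      simp only [PartSizes]
      rw [dif_pos hjl, dif_pos hjl]
      show (Q (σ ⟨j, hjl⟩)).card = (F ⟨j, hjl⟩).card
      rw [hcardP ⟨j, hjl⟩]
      rw [if_neg (fun h => by
        have h5 : j = u := congrArg Fin.val h
        omega), if_neg (fun h => by
        have h5 : j = ℓ - 1 := congrArg Fin.val h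
        omega)]
    · show PartSizes F u < PartSizes P u
      simp only [PartSizes]
      rw [dif_pos (by omega : u < ℓ), dif_pos (by omega : u < ℓ)]
      show (F ⟨u, by omega⟩).card < (Q (σ ⟨u, by omega⟩)).card
      have h5 : (⟨u, by omega⟩ : Fin ℓ) = uF := rfl
      rw [h5, hQu, hcard_uF]
      omega
  · -- CASE B : last block is a singleton; drop it
    have hL1 : (F last).card = 1 :=
      le_antisymm hsmall (Finset.card_pos.2 (hne last))
    have hQlast0 : Q last = ∅ := by
      rw [← Finset.card_eq_zero, hcardlast, hL1]
    set c : Fin (ℓ - 1) → Fin ℓ := fun j => ⟨j.1, by omega⟩ with hcdef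
    have hc_ne_last : ∀ j, c j ≠ last := by
      intro j h
      have h5 : (j : ℕ) = ℓ - 1 := congrArg Fin.val h
      have := j.2
      omega
    set P : Fin (ℓ - 1) → Finset (Fin M) := fun j => Q (σ (c j)) with hPdef
    have hP : IsOrderedLIPartitionOn K φ Finset.univ P := by
      refine ⟨?_, ?_, ?_, ?_, ?_⟩
      · intro j
        rw [← Finset.card_pos]
        show 0 < (Q (σ (c j))).card
        rw [hcardP (c j)]
        by_cases h1 : c j = uF
        · rw [if_pos h1]; omega
        · rw [if_neg h1, if_neg (hc_ne_last j)]
          exact Finset.card_pos.2 (hne _)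
      · intro i j hij
        apply hQdisj
        intro h
        apply hij
        have h5 := σ.injective h
        apply Fin.ext
        exact congrArg (fun x : Fin ℓ => x.1) h5
      · apply Finset.eq_univ_of_forall
        intro a
        have hmem : a ∈ Finset.univ.biUnion Q := by
          rw [hQcover]; exact Finset.mem_univ a
        rcases Finset.mem_biUnion.1 hmem with ⟨i, _, hi⟩
        have hi_ne : i ≠ last := by
          intro h
          rw [h, hQlast0] at hi
          exact absurd hi (Finset.notMem_empty _)
        have hσi_ne : σ i ≠ last := hσ_ne_last i hi_ne
        have hσi_lt : (σ i).1 < ℓ - 1 := by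
          have h5 := (σ i).2
          have h7 : (σ i).1 ≠ ℓ - 1 := fun h => hσi_ne (Fin.ext h)
          omega
        rw [Finset.mem_biUnion]
        refine ⟨⟨(σ i).1, hσi_lt⟩, Finset.mem_univ _, ?_⟩
        show a ∈ Q (σ (c ⟨(σ i).1, hσi_lt⟩))
        have h8 : c ⟨(σ i).1, hσi_lt⟩ = σ i := Fin.ext rfl
        rw [h8]
        have h9 : σ (σ i) = i := by
          rw [hσdef]
          exact Equiv.swap_apply_self _ _ _
        rw [h9]
        exact hi
      · intro j
        exact hLIQ _
      · intro i j hij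
        have hijv : (i : ℕ) ≤ (j : ℕ) := hij
        have hcij : c i ≤ c j := by
          rw [Fin.le_def]
          exact hijv
        have hFji : (F (c j)).card ≤ (F (c i)).card := hmono (c i) (c j) hcij
        show (Q (σ (c j))).card ≤ (Q (σ (c i))).card
        rw [hcardP (c i), hcardP (c j)]
        by_cases h1 : c j = uF
        · rw [if_pos h1]
          by_cases h3 : c i = uF
          · rw [if_pos h3]
          · rw [if_neg h3, if_neg (hc_ne_last i)]
            have hju : (j : ℕ) = u := congrArg Fin.val h1
            have hiu : (i : ℕ) < u := by
              have h5 : (i : ℕ) ≠ u := fun h => h3 (Fin.ext h)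
              omega
            have h6 := hu_gt i.1 (by omega) hiu
            exact h6
        · rw [if_neg h1, if_neg (hc_ne_last j)]
          by_cases h3 : c i = uF
          · rw [if_pos h3]
            have h5 : (F (c i)).card = (F istar).card := by rw [h3]; exact hcard_uF
            omega
          · rw [if_neg h3, if_neg (hc_ne_last i)]
            exact hFji
    have hlex := hmax (ℓ - 1) P hP
    refine lex_false (u := u) ?_ ?_ hlex
    · intro j hj
      have hjl : j < ℓ - 1 := by omega
      have hjl' : j < ℓ := by omega
      show PartSizes P j = PartSizes F j
      simp only [PartSizes]
      rw [dif_pos hjl, dif_pos hjl']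
      show (Q (σ (c ⟨j, hjl⟩))).card = (F ⟨j, hjl'⟩).card
      rw [hcardP (c ⟨j, hjl⟩)]
      rw [if_neg (fun h => by
        have h5 : j = u := congrArg Fin.val h
        omega), if_neg (hc_ne_last _)]
    · show PartSizes F u < PartSizes P u
      have h5 : ∀ (h : u < ℓ - 1), P ⟨u, h⟩ = Q (σ uF) := by
        intro h
        show Q (σ (c ⟨u, h⟩)) = Q (σ uF)
        rw [show c ⟨u, h⟩ = uF from Fin.ext rfl]
      have h7 : ∀ (h : u < ℓ), (F ⟨u, h⟩).card = (F istar).card := by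
        intro h
        rw [show (⟨u, h⟩ : Fin ℓ) = uF from Fin.ext rfl]
        exact hcard_uF
      have hlt : u < ℓ - 1 := by omega
      have hlt' : u < ℓ := by omega
      have e1 : PartSizes P u = (Q (σ uF)).card := by
        simp only [PartSizes]
        rw [dif_pos hlt]
      have e2 : PartSizes F u = (F istar).card := by
        simp only [PartSizes]
        rw [dif_pos hlt']
        exact h7 hlt'
      rw [e1, e2, hQu]
      omega

end Improve

set_option maxHeartbeats 1000000 in
/-- Failure of the Rado–Horn inequality in the redundant case.  If `Φ` has a
fundamental partition `{F_1,…,F_ℓ}` with `k < ℓ`, then there exists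
`J ⊆ {1,…,M}` with `|J| > k · dim span(φ_j : j ∈ J)`.  Explicitly, for any
index `m ∈ F_ℓ` and any `k`-transversal `T = S_1 ∪ … ∪ S_k` of `{F_1,…,F_k}`
with `φ_m ∈ span(T)`, the set `J = T ∪ {m}` satisfies
`|J| = k · dim span(T) + 1` and `dim span(J) = dim span(T)`, hence
`|J| > k · dim span(J)` (i.e. `|J|/dim span(J) = k + 1/dim span(T) > k`). -/
theorem rado_horn_inequality_fails {K V : Type*} [Field K] [AddCommGroup V] [Module K V]
    {M ℓ : ℕ} (k : ℕ) (φ : Fin M → V) (F : Fin ℓ → Finset (Fin M))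
    (hF : IsFundamentalOn K φ Finset.univ F) (hk : k < ℓ) :
    (∃ J : Finset (Fin M),
      k * Module.finrank K (Submodule.span K (φ '' ↑J)) < J.card) ∧
    ∀ m ∈ F ⟨ℓ - 1, by omega⟩, ∀ S : Fin k → Finset (Fin M),
      (∀ i, S i ⊆ F (Fin.castLE hk.le i)) →
      (∀ i j, Submodule.span K (φ '' ↑(S i)) = Submodule.span K (φ '' ↑(S j))) →
      φ m ∈ Submodule.span K (φ '' ↑(Finset.univ.biUnion S)) →
      (insert m (Finset.univ.biUnion S)).card =
          k * Module.finrank K (Submodule.span K (φ '' ↑(Finset.univ.biUnion S))) + 1 ∧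
      Module.finrank K (Submodule.span K (φ '' ↑(insert m (Finset.univ.biUnion S)))) =
          Module.finrank K (Submodule.span K (φ '' ↑(Finset.univ.biUnion S))) ∧
      k * Module.finrank K
          (Submodule.span K (φ '' ↑(insert m (Finset.univ.biUnion S)))) <
        (insert m (Finset.univ.biUnion S)).card := by
  classical
  constructor
  · -- existence of a violating set J
    set last : Fin ℓ := ⟨ℓ - 1, by omega⟩ with hlastdef
    obtain ⟨m, hm⟩ := hF.1.1 last
    rcases Nat.eq_zero_or_pos k with hk0 | hkpos
    · subst hk0
      refine ⟨{m}, ?_⟩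
      simp
    · have hℓ2 : 2 ≤ ℓ := by omega
      by_cases hcase : ∀ y, ReachRel (ArcRel K φ F last) m y →
          ∀ i : Fin ℓ, i ≠ last → φ y ∈ Submodule.span K (φ '' ↑(F i))
      · -- stuck case: build a transversal
        set R : Finset (Fin M) :=
          Finset.univ.filter (fun y => ReachRel (ArcRel K φ F last) m y) with hRdef
        set S : Fin k → Finset (Fin M) :=
          fun i => R ∩ F (Fin.castLE hk.le i) with hSdef
        have hS1 : ∀ i, S i ⊆ F (Fin.castLE hk.le i) :=
          fun i => Finset.inter_subset_right
        have hlast_ne : ∀ i : Fin k, (Fin.castLE hk.le i) ≠ last := by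
          intro i h
          have h5 : (i : ℕ) = ℓ - 1 := congrArg Fin.val h
          have := i.2
          omega
        have hkey : ∀ y, ReachRel (ArcRel K φ F last) m y → ∀ i : Fin ℓ, i ≠ last →
            φ y ∈ Submodule.span K (φ '' ↑(R ∩ F i)) := by
          intro y hy i hi
          by_cases hyF : y ∈ F i
          · exact mem_sp (Finset.mem_inter.2
              ⟨Finset.mem_filter.2 ⟨Finset.mem_univ _, hy⟩, hyF⟩)
          · have hspan := hcase y hy i hi
            have hstep := mem_sp_filter (hF.1.2.2.2.1 i) hspan
            refine sp_mono ?_ hstep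
            intro x hx
            rcases Finset.mem_filter.1 hx with ⟨hxF, hxno⟩
            refine Finset.mem_inter.2
              ⟨Finset.mem_filter.2 ⟨Finset.mem_univ _, ?_⟩, hxF⟩
            exact ReachRel.step hy (arcRel_iff.2 ⟨i, hi, hxF, hspan, hxno⟩)
        have hmR : m ∈ R := Finset.mem_filter.2 ⟨Finset.mem_univ _, ReachRel.base⟩
        have hspan_eq : ∀ i : Fin k, Submodule.span K (φ '' ↑(S i)) =
            Submodule.span K (φ '' ↑R) := by
          intro i
          apply le_antisymm
          · exact sp_mono Finset.inter_subset_left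
          · rw [Submodule.span_le]
            rintro v ⟨x, hx, rfl⟩
            rw [Finset.mem_coe, hRdef, Finset.mem_filter] at hx
            exact hkey x hx.2 _ (hlast_ne i)
        have hS2 : ∀ i j, Submodule.span K (φ '' ↑(S i)) =
            Submodule.span K (φ '' ↑(S j)) := by
          intro i j
          rw [hspan_eq i, hspan_eq j]
        have hS3 : φ m ∈ Submodule.span K (φ '' ↑(Finset.univ.biUnion S)) := by
          have h1 : φ m ∈ Submodule.span K (φ '' ↑(S ⟨0, hkpos⟩)) := by
            rw [hspan_eq]
            have := hkey m ReachRel.base _ (hlast_ne ⟨0, hkpos⟩)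
            exact sp_mono Finset.inter_subset_left this
          exact sp_mono (Finset.subset_biUnion_of_mem S (Finset.mem_univ _)) h1
        obtain ⟨_, _, h3⟩ := transversal_count hF.1 hk m hm S hS1 hS2 hS3
        exact ⟨insert m (Finset.univ.biUnion S), h3⟩
      · -- augmenting case: contradiction with fundamentality
        exfalso
        push_neg at hcase
        obtain ⟨y, hy, i, hi, hnot⟩ := hcase
        obtain ⟨n0, p0, hp00, hp0n, hp0arc⟩ := reach_path hy
        have hex : ∃ n, ∃ p : ℕ → Fin M, p 0 = m ∧
            (∀ t < n, ArcRel K φ F last (p t) (p (t + 1))) ∧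
            FreeV K φ F last (p n) :=
          ⟨n0, p0, hp00, hp0arc, by rw [hp0n]; exact freeV_iff.2 ⟨i, hi, hnot⟩⟩
        obtain ⟨p, hp0', harc', hfree'⟩ := Nat.find_spec hex
        refine improve_false hF hℓ2 m hm (Nat.find hex) p hp0' harc' hfree' ?_
        intro n hn p' h0' harc2 hfr
        exact Nat.find_min hex hn ⟨p', h0', harc2, hfr⟩
  · intro m hm S hS1 hS2 hS3
    exact transversal_count hF.1 hk m hm S hS1 hS2 hS3
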